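/- Every Â-colorable 4-regular graph is 2C₃-colorable, i.e., has an even cycle decomposition of size at most 3. -/

import Mathlib

/-- A loopless multigraph with vertex type `V` and edge type `E`. -/
structure Multigraph (V E : Type) where
  ends : E → Sym2 V
  loopless : ∀ e, ¬ (ends e).IsDiag

namespace Multigraph

variable {V E W F K L : Type}

/-- The set of edges incident with a vertex. -/
def edgesAt (G : Multigraph V E) (v : V) : Set E := {e | v ∈ G.ends e}

/-- The degree of a vertex: the number of incident edges. -/
noncomputable def deg (G : Multigraph V E) (v : V) : ℕ := (G.edgesAt v).ncard

/-- Two edges are adjacent if they are distinct and share an endpoint. -/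
def EdgeAdj (G : Multigraph V E) (e₁ e₂ : E) : Prop :=
  e₁ ≠ e₂ ∧ ∃ v, v ∈ G.ends e₁ ∧ v ∈ G.ends e₂

/-- A proper edge-coloring of `G` with colors in `C`: adjacent edges get
distinct colors. -/
def ProperEdgeColoring (G : Multigraph V E) {C : Type} (f : E → C) : Prop :=
  ∀ e₁ e₂, G.EdgeAdj e₁ e₂ → f e₁ ≠ f e₂

/-- `f` and `g` form an `H`-coloring of `G`: `f` is a proper edge-coloring and
`f(∂_G(u)) = ∂_H(g(u))` for every vertex `u`. -/
def IsHColoring (G : Multigraph V E) (H : Multigraph W F)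
    (f : E → F) (g : V → W) : Prop :=
  G.ProperEdgeColoring f ∧ ∀ u : V, f '' (G.edgesAt u) = H.edgesAt (g u)

/-- `G` is `H`-colorable. -/
def HColorable (G : Multigraph V E) (H : Multigraph W F) : Prop :=
  ∃ (f : E → F) (g : V → W), G.IsHColoring H f g

end Multigraph

/-- The graph `Â`: a triangle `0,1,2` with pendant edges `0-3` and `1-4`, and
two further edges between the (formerly) degree-two vertex `2` and its two
neighbours `0` and `1` on the triangle. -/
def AHat : Multigraph (Fin 5) (Fin 7) where
  ends := ![s(0,1), s(0,2), s(1,2), s(0,3), s(1,4), s(2,0), s(2,1)]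
  loopless := by decide

namespace Multigraph
variable {V E : Type}

/-- The vertices covered by a set of edges. -/
def vertsOf (G : Multigraph V E) (S : Set E) : Set V := {v | ∃ e ∈ S, v ∈ G.ends e}

/-- A set of edges forms a cycle: it is nonempty, every covered vertex lies on
exactly two of its edges, and it is connected. -/
def IsCycleSet (G : Multigraph V E) (S : Set E) : Prop :=
  S.Nonempty ∧ (∀ v ∈ G.vertsOf S, {e ∈ S | v ∈ G.ends e}.ncard = 2) ∧
  ∀ u ∈ G.vertsOf S, ∀ v ∈ G.vertsOf S,
    Relation.ReflTransGen (fun a b => ∃ e ∈ S, a ∈ G.ends e ∧ b ∈ G.ends e) u v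

/-- `G` has an even cycle decomposition of size at most 3: a partition of its
edge set into even cycles, which can be colored with 3 colors so that cycles of
the same color are vertex-disjoint. -/
def HasEvenCycleDecompSize3 (G : Multigraph V E) : Prop :=
  ∃ P : Set (Set E), (∀ e : E, ∃! S, S ∈ P ∧ e ∈ S) ∧
    (∀ S ∈ P, G.IsCycleSet S ∧ Even S.ncard) ∧
    ∃ c : Set E → Fin 3, ∀ S ∈ P, ∀ T ∈ P, S ≠ T → c S = c T →
      Disjoint (G.vertsOf S) (G.vertsOf T)

end Multigraph

namespace AhatAux

open Multigraph

lemma ncard_eq_of_finset (s : Set (Fin 7)) (t : Finset (Fin 7)) (h : ∀ k, k ∈ s ↔ k ∈ t) :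
    s.ncard = t.card := by
  rw [← Set.ncard_coe_finset]; congr 1; ext k; rw [Finset.mem_coe, h]

/-- group of each color: colors 0,3,4 / 1,5 / 2,6. -/
def grp : Fin 7 → Fin 3 := ![0,1,2,0,0,1,2]

/-- triangle colors -/
def tri (k : Fin 7) : Prop := k.val < 3

instance : DecidablePred tri := fun k => Nat.decLt _ _

variable {V E : Type} (G : Multigraph V E) (f : E → Fin 7) (g : V → Fin 5)

lemma injOn_f (hf : G.ProperEdgeColoring f) (v : V) : Set.InjOn f (G.edgesAt v) := by
  intro e₁ h₁ e₂ h₂ hfe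
  by_contra hne
  exact hf e₁ e₂ ⟨hne, v, h₁, h₂⟩ hfe

lemma count_at (hf : G.ProperEdgeColoring f)
    (hg : ∀ u, f '' (G.edgesAt u) = AHat.edgesAt (g u)) (v : V) (p : Fin 7 → Prop) :
    {e | e ∈ G.edgesAt v ∧ p (f e)}.ncard = {k | (g v) ∈ AHat.ends k ∧ p k}.ncard := by
  have himg : f '' {e | e ∈ G.edgesAt v ∧ p (f e)} = {k | (g v) ∈ AHat.ends k ∧ p k} := by
    ext k
    constructor
    · rintro ⟨e, ⟨he, hp⟩, rfl⟩
      have hk' : f e ∈ AHat.edgesAt (g v) := (hg v) ▸ ⟨e, he, rfl⟩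
      exact ⟨hk', hp⟩
    · rintro ⟨hk, hp⟩
      have hk' : k ∈ AHat.edgesAt (g v) := hk
      rw [← hg v] at hk'
      obtain ⟨e, he, rfl⟩ := hk'
      exact ⟨e, ⟨he, hp⟩, rfl⟩
  rw [← himg, Set.ncard_image_of_injOn ((injOn_f G f hf v).mono (fun e he => he.1))]

lemma g_mem (hreg : ∀ v, G.deg v = 4) (hf : G.ProperEdgeColoring f)
    (hg : ∀ u, f '' (G.edgesAt u) = AHat.edgesAt (g u)) (v : V) :
    g v = 0 ∨ g v = 1 ∨ g v = 2 := by
  have h4 : (AHat.edgesAt (g v)).ncard = 4 := by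
    rw [← hg v, Set.ncard_image_of_injOn (injOn_f G f hf v)]
    exact hreg v
  by_contra h
  push_neg at h
  obtain ⟨h0, h1, h2⟩ := h
  have h34 : g v = 3 ∨ g v = 4 := by omega
  rcases h34 with h3 | h3 <;> rw [h3] at h4
  · rw [show AHat.edgesAt 3 = {k | (3 : Fin 5) ∈ AHat.ends k} from rfl,
      ncard_eq_of_finset _ {3} (by decide)] at h4
    simp at h4
  · rw [show AHat.edgesAt 4 = {k | (4 : Fin 5) ∈ AHat.ends k} from rfl,
      ncard_eq_of_finset _ {4} (by decide)] at h4
    simp at h4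

lemma grp_count (hreg : ∀ v, G.deg v = 4) (hf : G.ProperEdgeColoring f)
    (hg : ∀ u, f '' (G.edgesAt u) = AHat.edgesAt (g u)) (v : V) (i : Fin 3)
    (hact : ∃ e, e ∈ G.edgesAt v ∧ grp (f e) = i) :
    {e | e ∈ G.edgesAt v ∧ grp (f e) = i}.ncard = 2 := by
  rw [count_at G f g hf hg v (fun k => grp k = i)]
  obtain ⟨e, he, hge⟩ := hact
  have hk' : f e ∈ AHat.edgesAt (g v) := (hg v) ▸ ⟨e, he, rfl⟩
  have hk : (g v) ∈ AHat.ends (f e) := hk'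
  have hw := g_mem G f g hreg hf hg v
  have hi : i = 0 ∨ i = 1 ∨ i = 2 := by omega
  rcases hw with hw | hw | hw <;> rw [hw] at hk ⊢ <;> rcases hi with rfl | rfl | rfl <;>
    first
      | exact (ncard_eq_of_finset _ {0,3} (by decide)).trans (by decide)
      | exact (ncard_eq_of_finset _ {1,5} (by decide)).trans (by decide)
      | exact (ncard_eq_of_finset _ {0,4} (by decide)).trans (by decide)
      | exact (ncard_eq_of_finset _ {2,6} (by decide)).trans (by decide)
      | (exfalso; revert hk hge; generalize f e = k; revert k; decide)

lemma tri_count (hreg : ∀ v, G.deg v = 4) (hf : G.ProperEdgeColoring f)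
    (hg : ∀ u, f '' (G.edgesAt u) = AHat.edgesAt (g u)) (v : V) (i : Fin 3)
    (hact : ∃ e, e ∈ G.edgesAt v ∧ grp (f e) = i) (b : Bool) :
    {e | e ∈ G.edgesAt v ∧ (grp (f e) = i ∧ (tri (f e) ↔ b = true))}.ncard = 1 := by
  rw [count_at G f g hf hg v (fun k => grp k = i ∧ (tri k ↔ b = true))]
  obtain ⟨e, he, hge⟩ := hact
  have hk' : f e ∈ AHat.edgesAt (g v) := (hg v) ▸ ⟨e, he, rfl⟩
  have hk : (g v) ∈ AHat.ends (f e) := hk'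
  have hw := g_mem G f g hreg hf hg v
  have hi : i = 0 ∨ i = 1 ∨ i = 2 := by omega
  rcases hw with hw | hw | hw <;> rw [hw] at hk ⊢ <;> rcases hi with rfl | rfl | rfl <;>
    rcases b with _ | _ <;>
    first
      | exact (ncard_eq_of_finset _ {0} (by decide)).trans (by decide)
      | exact (ncard_eq_of_finset _ {1} (by decide)).trans (by decide)
      | exact (ncard_eq_of_finset _ {2} (by decide)).trans (by decide)
      | exact (ncard_eq_of_finset _ {3} (by decide)).trans (by decide)
      | exact (ncard_eq_of_finset _ {4} (by decide)).trans (by decide)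
      | exact (ncard_eq_of_finset _ {5} (by decide)).trans (by decide)
      | exact (ncard_eq_of_finset _ {6} (by decide)).trans (by decide)
      | (exfalso; revert hk hge; generalize f e = k; revert k; decide)

-- continuation

lemma ends_rep (e : E) : ∃ a b, G.ends e = s(a,b) ∧ a ≠ b := by
  have h := G.loopless e
  revert h
  induction G.ends e using Sym2.ind with
  | _ x y => exact fun h => ⟨x, y, rfl, by simpa [Sym2.mk_isDiag_iff] using h⟩

def rel (i : Fin 3) (a b : V) : Prop :=
  ∃ e, AhatAux.grp (f e) = i ∧ a ∈ G.ends e ∧ b ∈ G.ends e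

def R (i : Fin 3) : V → V → Prop := Relation.ReflTransGen (rel G f i)

lemma R_symm {i : Fin 3} {a b : V} (h : R G f i a b) : R G f i b a :=
  haveI : Std.Symm (rel G f i) := ⟨fun _ _ ⟨e, h1, h2, h3⟩ => ⟨e, h1, h3, h2⟩⟩
  Std.Symm.symm (r := Relation.ReflTransGen (rel G f i)) _ _ h

def comp (i : Fin 3) (v : V) : Set E :=
  {e | AhatAux.grp (f e) = i ∧ ∃ a, a ∈ G.ends e ∧ R G f i v a}

lemma R_all_ends {i : Fin 3} {v : V} {e : E} (he : e ∈ comp G f i v) {b : V}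
    (hb : b ∈ G.ends e) : R G f i v b := by
  obtain ⟨hgrp, a, ha, hR⟩ := he
  exact hR.trans (Relation.ReflTransGen.single ⟨e, hgrp, ha, hb⟩)

lemma comp_congr {i : Fin 3} {v w : V} (h : R G f i v w) : comp G f i v = comp G f i w := by
  ext e
  constructor
  · rintro ⟨hgrp, a, ha, hR⟩
    exact ⟨hgrp, a, ha, (R_symm G f h).trans hR⟩
  · rintro ⟨hgrp, a, ha, hR⟩
    exact ⟨hgrp, a, ha, h.trans hR⟩

lemma R_of_mem_verts {i : Fin 3} {v u : V} (hu : u ∈ G.vertsOf (comp G f i v)) :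
    R G f i v u := by
  obtain ⟨e, he, hue⟩ := hu
  exact R_all_ends G f he hue

lemma comp_edges_at {i : Fin 3} {v u : V} (hu : u ∈ G.vertsOf (comp G f i v)) :
    {e | e ∈ comp G f i v ∧ u ∈ G.ends e}
      = {e | e ∈ G.edgesAt u ∧ AhatAux.grp (f e) = i} := by
  have hR := R_of_mem_verts G f hu
  ext e
  constructor
  · rintro ⟨⟨hgrp, _⟩, hue⟩
    exact ⟨hue, hgrp⟩
  · rintro ⟨hue, hgrp⟩
    exact ⟨⟨hgrp, u, hue, hR⟩, hue⟩

lemma reach_in_comp {i : Fin 3} {v a b : V} (hva : R G f i v a) (hab : R G f i a b) :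
    Relation.ReflTransGen
      (fun x y => ∃ e ∈ comp G f i v, x ∈ G.ends e ∧ y ∈ G.ends e) a b := by
  induction hab with
  | refl => exact Relation.ReflTransGen.refl
  | tail hac step ih =>
      obtain ⟨e, hgrp, hc, hd⟩ := step
      exact ih.tail ⟨e, ⟨hgrp, _, hc, hva.trans hac⟩, hc, hd⟩

lemma double_count {α β : Type} (s : Finset α) (t : Finset β) (r : α → β → Prop)
    [∀ a b, Decidable (r a b)]
    (h1 : ∀ a ∈ s, (t.filter (fun b => r a b)).card = 1)
    (h2 : ∀ b ∈ t, (s.filter (fun a => r a b)).card = 2) :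
    s.card = 2 * t.card := by
  calc s.card = ∑ a ∈ s, 1 := by simp
    _ = ∑ a ∈ s, (t.filter (fun b => r a b)).card :=
        (Finset.sum_congr rfl (fun a ha => (h1 a ha).symm))
    _ = ∑ a ∈ s, ∑ b ∈ t, if r a b then 1 else 0 := by
        refine Finset.sum_congr rfl (fun a _ => ?_)
        rw [Finset.card_filter]
    _ = ∑ b ∈ t, ∑ a ∈ s, if r a b then 1 else 0 := Finset.sum_comm
    _ = ∑ b ∈ t, (s.filter (fun a => r a b)).card := by
        refine Finset.sum_congr rfl (fun b _ => ?_)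
        rw [Finset.card_filter]
    _ = ∑ b ∈ t, 2 := Finset.sum_congr rfl h2
    _ = 2 * t.card := by
        rw [Finset.sum_const, smul_eq_mul, mul_comm]

lemma ncard_sep_finset {α : Type} {s : Set α} (hs : s.Finite) (q : α → Prop)
    [DecidablePred q] :
    (hs.toFinset.filter q).card = {x | x ∈ s ∧ q x}.ncard := by
  rw [← Set.ncard_coe_finset]
  congr 1
  ext x
  simp [Set.Finite.mem_toFinset]

lemma comp_isCycle (hreg : ∀ v, G.deg v = 4) (hf : G.ProperEdgeColoring f)
    (hg : ∀ u, f '' (G.edgesAt u) = AHat.edgesAt (g u)) (i : Fin 3) (v : V)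
    (hne : v ∈ G.vertsOf (comp G f i v)) : G.IsCycleSet (comp G f i v) := by
  refine ⟨?_, ?_, ?_⟩
  · obtain ⟨e, he, _⟩ := hne
    exact ⟨e, he⟩
  · intro u hu
    rw [show {e ∈ comp G f i v | u ∈ G.ends e} = {e | e ∈ comp G f i v ∧ u ∈ G.ends e}
        from rfl, comp_edges_at G f hu]
    apply grp_count G f g hreg hf hg u i
    obtain ⟨e, he, hue⟩ := hu
    exact ⟨e, hue, he.1⟩
  · intro u hu w hw
    exact reach_in_comp G f (R_of_mem_verts G f hu)
      ((R_symm G f (R_of_mem_verts G f hu)).trans (R_of_mem_verts G f hw))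

lemma comp_even (hreg : ∀ v, G.deg v = 4) (hf : G.ProperEdgeColoring f)
    (hg : ∀ u, f '' (G.edgesAt u) = AHat.edgesAt (g u)) (i : Fin 3) (v : V)
    (hne : v ∈ G.vertsOf (comp G f i v)) : Even (comp G f i v).ncard := by
  classical
  set S := comp G f i v with hS
  by_cases hfin : S.Finite
  swap
  · rw [Set.Infinite.ncard hfin]
    exact Even.zero
  have hvfin : (G.vertsOf S).Finite := by
    have hsub : G.vertsOf S ⊆ ⋃ e ∈ S, {a | a ∈ G.ends e} := by
      rintro u ⟨e, he, hue⟩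
      exact Set.mem_biUnion he hue
    refine Set.Finite.subset (Set.Finite.biUnion hfin (fun e _ => ?_)) hsub
    obtain ⟨a, b, hab, _⟩ := ends_rep G e
    refine Set.Finite.subset ((Set.finite_singleton b).insert a) ?_
    intro z hz
    have hz' : z ∈ G.ends e := hz
    rw [hab] at hz'
    rcases Sym2.mem_iff.1 hz' with rfl | rfl <;> simp
  have memTfin : ∀ b : Bool, ({e | e ∈ S ∧ (tri (f e) ↔ b = true)} : Set E).Finite :=
    fun b => hfin.subset (fun e he => he.1)
  have key1 : ∀ u ∈ G.vertsOf S, ∀ b : Bool,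
      {e | e ∈ S ∧ ((tri (f e) ↔ b = true) ∧ u ∈ G.ends e)}.ncard = 1 := by
    intro u hu b
    have hset : {e | e ∈ S ∧ ((tri (f e) ↔ b = true) ∧ u ∈ G.ends e)}
        = {e | e ∈ G.edgesAt u ∧ (grp (f e) = i ∧ (tri (f e) ↔ b = true))} := by
      ext e
      constructor
      · rintro ⟨heS, htri, hue⟩
        exact ⟨hue, heS.1, htri⟩
      · rintro ⟨hue, hgrp, htri⟩
        exact ⟨⟨hgrp, u, hue, R_of_mem_verts G f hu⟩, htri, hue⟩
    rw [hset]
    apply tri_count G f g hreg hf hg u i _ b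
    obtain ⟨e, he, hue⟩ := hu
    exact ⟨e, hue, he.1⟩
  have hcount : ∀ b : Bool, hvfin.toFinset.card = 2 * (memTfin b).toFinset.card := by
    intro b
    refine double_count _ _ (fun u e => u ∈ G.ends e) ?_ ?_
    · intro u hu
      rw [ncard_sep_finset (memTfin b) (fun e => u ∈ G.ends e),
        show {x | x ∈ {e | e ∈ S ∧ (tri (f e) ↔ b = true)} ∧ u ∈ G.ends x}
          = {e | e ∈ S ∧ ((tri (f e) ↔ b = true) ∧ u ∈ G.ends e)} from by
            ext e; simp only [Set.mem_setOf_eq, and_assoc]]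
      exact key1 u (hvfin.mem_toFinset.1 hu) b
    · intro e he
      have heT := (memTfin b).mem_toFinset.1 he
      obtain ⟨a, b', hab, hne'⟩ := ends_rep G e
      have hae : a ∈ G.ends e := by rw [hab]; exact Sym2.mem_mk_left a b'
      have hbe : b' ∈ G.ends e := by rw [hab]; exact Sym2.mem_mk_right a b'
      have haS : a ∈ G.vertsOf S := ⟨e, heT.1, hae⟩
      have hbS : b' ∈ G.vertsOf S := ⟨e, heT.1, hbe⟩
      rw [show hvfin.toFinset.filter (fun u => u ∈ G.ends e) = {a, b'} from ?_]
      · exact Finset.card_pair hne'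
      · ext u
        simp only [Finset.mem_filter, Set.Finite.mem_toFinset, Finset.mem_insert,
          Finset.mem_singleton]
        constructor
        · rintro ⟨_, hue⟩
          rw [hab] at hue
          exact Sym2.mem_iff.1 hue
        · rintro (rfl | rfl)
          · exact ⟨haS, hae⟩
          · exact ⟨hbS, hbe⟩
  have hU : {e | e ∈ S ∧ (tri (f e) ↔ true = true)}
      ∪ {e | e ∈ S ∧ (tri (f e) ↔ false = true)} = S := by
    ext e
    constructor
    · rintro (⟨he, _⟩ | ⟨he, _⟩) <;> exact he
    · intro he
      by_cases ht : tri (f e)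
      · exact Or.inl ⟨he, by simpa using ht⟩
      · exact Or.inr ⟨he, by simpa using ht⟩
  have hD : Disjoint {e | e ∈ S ∧ (tri (f e) ↔ true = true)}
      {e | e ∈ S ∧ (tri (f e) ↔ false = true)} := by
    rw [Set.disjoint_left]
    rintro e ⟨_, h1⟩ ⟨_, h2⟩
    simp at h1 h2
    exact h2 h1
  have hsplit : S.ncard = {e | e ∈ S ∧ (tri (f e) ↔ true = true)}.ncard
      + {e | e ∈ S ∧ (tri (f e) ↔ false = true)}.ncard := by
    rw [← Set.ncard_union_eq hD (memTfin true) (memTfin false), hU]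
  rw [hsplit, Set.ncard_eq_toFinset_card _ (memTfin true),
    Set.ncard_eq_toFinset_card _ (memTfin false)]
  have h1 := hcount true
  have h2 := hcount false
  have heq : (memTfin true).toFinset.card = (memTfin false).toFinset.card := by omega
  rw [heq]
  exact Even.add_self _

theorem main (hreg : ∀ v, G.deg v = 4) (hf : G.ProperEdgeColoring f)
    (hg : ∀ u, f '' (G.edgesAt u) = AHat.edgesAt (g u)) :
    G.HasEvenCycleDecompSize3 := by
  classical
  refine ⟨{S | ∃ i w, w ∈ G.vertsOf (comp G f i w) ∧ S = comp G f i w}, ?_, ?_, ?_⟩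
  · intro e
    obtain ⟨a, b, hab, hne⟩ := ends_rep G e
    have hae : a ∈ G.ends e := by rw [hab]; exact Sym2.mem_mk_left a b
    have he : e ∈ comp G f (grp (f e)) a := ⟨rfl, a, hae, Relation.ReflTransGen.refl⟩
    refine ⟨comp G f (grp (f e)) a, ⟨⟨grp (f e), a, ⟨e, he, hae⟩, rfl⟩, he⟩, ?_⟩
    rintro S ⟨⟨j, w, hw, rfl⟩, heS⟩
    have hj : j = grp (f e) := (heS.1).symm
    subst hj
    exact comp_congr G f (R_all_ends G f heS hae)
  · rintro S ⟨i, w, hw, rfl⟩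
    exact ⟨comp_isCycle G f g hreg hf hg i w hw, comp_even G f g hreg hf hg i w hw⟩
  · have hci : ∀ (k : Fin 3) (y : V) (_ : ∃ e, e ∈ comp G f k y),
        (if h' : ∃ e, e ∈ comp G f k y then grp (f h'.choose) else 0) = k := by
      intro k y h
      rw [dif_pos h]
      exact h.choose_spec.1
    refine ⟨fun S => if h : ∃ e, e ∈ S then grp (f h.choose) else 0, ?_⟩
    rintro S ⟨i, w, hw, rfl⟩ T ⟨j, x, hx, rfl⟩ hne' hc
    have hwne : ∃ e, e ∈ comp G f i w := by
      obtain ⟨e, he, _⟩ := hw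
      exact ⟨e, he⟩
    have hxne : ∃ e, e ∈ comp G f j x := by
      obtain ⟨e, he, _⟩ := hx
      exact ⟨e, he⟩
    simp only at hc
    rw [hci i w hwne, hci j x hxne] at hc
    subst hc
    refine Set.disjoint_left.2 ?_
    intro u huS huT
    exact hne' (comp_congr G f
      ((R_of_mem_verts G f huS).trans (R_symm G f (R_of_mem_verts G f huT))))


end AhatAux

/-- Every `Â`-colorable 4-regular graph has an even cycle decomposition of
size at most 3 (equivalently, is `2C₃`-colorable). -/
theorem evenCycleDecomp_of_ahatColorable {V E : Type} (G : Multigraph V E)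
    (hreg : ∀ v : V, G.deg v = 4) (hcol : G.HColorable AHat) :
    G.HasEvenCycleDecompSize3 := by
  obtain ⟨f, g, hf, hg⟩ := hcol
  exact AhatAux.main G f g hreg hf hg
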